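/- If a proper simplicial complex K on [n] without ghost vertices admits a K-submodular function, then K is a threshold complex. -/
import Mathlib


open Finset

/-- A simplicial complex on `[n]`: a family of subsets containing `∅` and
closed under taking subsets. -/
def IsComplex (n : ℕ) (K : Set (Finset (Fin n))) : Prop :=
  ∅ ∈ K ∧ ∀ A B : Finset (Fin n), A ⊆ B → B ∈ K → A ∈ K

/-- No ghost vertices: every singleton is a face. -/
def NoGhost (n : ℕ) (K : Set (Finset (Fin n))) : Prop :=
  ∀ i : Fin n, ({i} : Finset (Fin n)) ∈ K

/-- `K` is a threshold complex: there are strictly positive weights `w` and a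
quota `q` with `A ∈ K ↔ w(A) < q`. -/
def IsThreshold (n : ℕ) (K : Set (Finset (Fin n))) : Prop :=
  ∃ (w : Fin n → ℝ) (q : ℝ), (∀ i, 0 < w i) ∧
    ∀ A : Finset (Fin n), A ∈ K ↔ ∑ i ∈ A, w i < q

/-- A K-submodular function: a pair of vectors `x y : [n] → ℝ` satisfying, for
every ridge datum `[n] = X1 ⊔ {c1,c2} ⊔ X2` (so `X2 = (X1 ∪ {c1,c2})ᶜ`) with
`X1 ∈ K` and `X2 ∈ K°` (i.e. `X2ᶜ = X1 ∪ {c1,c2} ∉ K`):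
the Λ-, V- and X-configuration inequalities. -/
def IsKSubmodular (n : ℕ) (K : Set (Finset (Fin n))) (x y : Fin n → ℝ) : Prop :=
  ∀ (X1 : Finset (Fin n)) (c1 c2 : Fin n),
    c1 ≠ c2 → c1 ∉ X1 → c2 ∉ X1 → X1 ∈ K → insert c1 (insert c2 X1) ∉ K →
    ((insert c1 X1 ∈ K → insert c2 X1 ∈ K →
        ∑ i ∈ X1, x i + x c1 + x c2 > ∑ j ∈ (insert c1 (insert c2 X1))ᶜ, y j) ∧
     (insert c1 X1 ∉ K → insert c2 X1 ∉ K →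
        ∑ j ∈ (insert c1 (insert c2 X1))ᶜ, y j + y c1 + y c2 > ∑ i ∈ X1, x i) ∧
     (insert c2 X1 ∈ K → insert c1 X1 ∉ K → x c2 + y c2 > 0))

/-- A non-strict K-submodular function: the Λ- and V-inequalities are non-strict,
and for X-configurations with distinguished element `c2` one requires
`x c2 > 0` and `y c2 > 0`. -/
def IsNonStrictKSubmodular (n : ℕ) (K : Set (Finset (Fin n))) (x y : Fin n → ℝ) : Prop :=
  ∀ (X1 : Finset (Fin n)) (c1 c2 : Fin n),
    c1 ≠ c2 → c1 ∉ X1 → c2 ∉ X1 → X1 ∈ K → insert c1 (insert c2 X1) ∉ K →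
    ((insert c1 X1 ∈ K → insert c2 X1 ∈ K →
        ∑ i ∈ X1, x i + x c1 + x c2 ≥ ∑ j ∈ (insert c1 (insert c2 X1))ᶜ, y j) ∧
     (insert c1 X1 ∉ K → insert c2 X1 ∉ K →
        ∑ j ∈ (insert c1 (insert c2 X1))ᶜ, y j + y c1 + y c2 ≥ ∑ i ∈ X1, x i) ∧
     (insert c2 X1 ∈ K → insert c1 X1 ∉ K → 0 < x c2 ∧ 0 < y c2))

/-- `K` (the set of losing coalitions) is roughly weighted with strictly positive
weights `w` and quota `q > 0`. -/
def RoughlyWeighted (n : ℕ) (K : Set (Finset (Fin n))) (w : Fin n → ℝ) (q : ℝ) : Prop :=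
  (∀ i, 0 < w i) ∧ 0 < q ∧ ∀ X : Finset (Fin n),
    (q < ∑ i ∈ X, w i → X ∉ K) ∧ (∑ i ∈ X, w i < q → X ∈ K)

set_option linter.unusedSectionVars false

namespace ThresholdAux

variable {n : ℕ}

lemma sum_insert_two (x : Fin n → ℝ) (X1 : Finset (Fin n)) (a b : Fin n)
    (hab : a ≠ b) (ha : a ∉ X1) (hb : b ∉ X1) :
    ∑ i ∈ insert a (insert b X1), x i = ∑ i ∈ X1, x i + x a + x b := by
  rw [Finset.sum_insert (by simp [hab, ha]), Finset.sum_insert hb]; ring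

lemma sdiff_pair_sum (y : Fin n → ℝ) (U M : Finset (Fin n)) (a b : Fin n)
    (haU : a ∈ U) (hbU : b ∈ U) (haM : a ∉ M) (hbM : b ∉ M) (hab : a ≠ b) :
    ∑ j ∈ U \ M, y j = ∑ j ∈ U \ insert a (insert b M), y j + y a + y b := by
  have h : U \ M = insert a (insert b (U \ insert a (insert b M))) := by
    ext i
    simp only [mem_sdiff, mem_insert]
    constructor
    · rintro ⟨hiU, hiM⟩
      rcases eq_or_ne i a with rfl | h1
      · exact Or.inl rfl
      rcases eq_or_ne i b with rfl | h2
      · exact Or.inr (Or.inl rfl)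
      · exact Or.inr (Or.inr ⟨hiU, by push_neg; exact ⟨h1, h2, hiM⟩⟩)
    · rintro (rfl | rfl | ⟨hiU, hi⟩)
      · exact ⟨haU, haM⟩
      · exact ⟨hbU, hbM⟩
      · push_neg at hi
        exact ⟨hiU, hi.2.2⟩
  rw [h, Finset.sum_insert (by simp [hab]), Finset.sum_insert (by simp)]
  ring

lemma f_diff (x y : Fin n → ℝ) (U A B : Finset (Fin n)) (hAB : A ⊆ B) (hBU : B ⊆ U) :
    (∑ i ∈ B, x i - ∑ j ∈ U \ B, y j)
      = (∑ i ∈ A, x i - ∑ j ∈ U \ A, y j) + ∑ i ∈ B \ A, (x i + y i) := by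
  have h1 : ∑ i ∈ B \ A, x i + ∑ i ∈ A, x i = ∑ i ∈ B, x i := Finset.sum_sdiff hAB
  have hsub : U \ B ⊆ U \ A := by
    intro i hi
    simp only [mem_sdiff] at hi ⊢
    exact ⟨hi.1, fun h => hi.2 (hAB h)⟩
  have h3 : (U \ A) \ (U \ B) = B \ A := by
    ext i; simp only [mem_sdiff]; constructor
    · rintro ⟨⟨hiU, hiA⟩, h⟩
      push_neg at h
      exact ⟨h hiU, hiA⟩
    · rintro ⟨hiB, hiA⟩
      refine ⟨⟨hBU hiB, hiA⟩, ?_⟩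
      push_neg
      intro _
      exact hiB
  have h2 : ∑ j ∈ (U \ A) \ (U \ B), y j + ∑ j ∈ U \ B, y j = ∑ j ∈ U \ A, y j :=
    Finset.sum_sdiff hsub
  rw [h3] at h2
  have h4 : ∑ i ∈ B \ A, (x i + y i) = ∑ i ∈ B \ A, x i + ∑ i ∈ B \ A, y i :=
    Finset.sum_add_distrib
  linarith

/-- Relative K-submodularity on ground set `U`. -/
def RelSub (U : Finset (Fin n)) (K : Set (Finset (Fin n))) (x y : Fin n → ℝ) : Prop :=
  ∀ (X1 : Finset (Fin n)) (c1 c2 : Fin n),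
    c1 ∈ U → c2 ∈ U → c1 ≠ c2 → c1 ∉ X1 → c2 ∉ X1 → X1 ∈ K →
    insert c1 (insert c2 X1) ∉ K →
    ((insert c1 X1 ∈ K → insert c2 X1 ∈ K →
        ∑ i ∈ X1, x i + x c1 + x c2 > ∑ j ∈ U \ insert c1 (insert c2 X1), y j) ∧
     (insert c1 X1 ∉ K → insert c2 X1 ∉ K →
        ∑ j ∈ U \ insert c1 (insert c2 X1), y j + y c1 + y c2 > ∑ i ∈ X1, x i) ∧
     (insert c2 X1 ∈ K → insert c1 X1 ∉ K → x c2 + y c2 > 0))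

section Main

variable (U : Finset (Fin n)) (K : Set (Finset (Fin n))) (x y : Fin n → ℝ)
variable (hmem : ∀ A ∈ K, A ⊆ U) (hemp : ∅ ∈ K)
variable (hdown : ∀ A B : Finset (Fin n), A ⊆ B → B ∈ K → A ∈ K)
variable (hU : U ∉ K) (hgh : ∀ i ∈ U, ({i} : Finset (Fin n)) ∈ K)
variable (hsub : RelSub U K x y)
variable (hnoco : ∀ c ∈ U, U.erase c ∉ K)

include hmem hU hnoco in
lemma two_outside (M : Finset (Fin n)) (hM : M ∈ K) : 1 < (U \ M).card := by
  have hMU : M ⊆ U := hmem M hM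
  have hne : (U \ M).Nonempty := by
    rw [Finset.sdiff_nonempty]
    intro h
    exact hU (by rw [Finset.Subset.antisymm h hMU]; exact hM)

  rcases Nat.lt_or_ge 1 (U \ M).card with h | h
  · exact h
  · exfalso
    have hcard : (U \ M).card = 1 := le_antisymm h (Finset.card_pos.mpr hne)
    obtain ⟨d, hd⟩ := Finset.card_eq_one.mp hcard
    have hdU : d ∈ U ∧ d ∉ M := by
      have : d ∈ U \ M := hd ▸ Finset.mem_singleton_self d
      exact Finset.mem_sdiff.mp this
    have hMeq : M = U.erase d := by
      ext i
      simp only [Finset.mem_erase]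
      constructor
      · intro hiM
        refine ⟨?_, hMU hiM⟩
        rintro rfl
        exact hdU.2 hiM
      · rintro ⟨hid, hiU⟩
        by_contra hiM
        have : i ∈ U \ M := Finset.mem_sdiff.mpr ⟨hiU, hiM⟩
        rw [hd] at this
        exact hid (Finset.mem_singleton.mp this)
    exact hnoco d hdU.1 (hMeq ▸ hM)

include hmem hU hdown hsub hnoco in
lemma V_at (M : Finset (Fin n)) (hM : M ∈ K)
    (hmax : ∀ c ∈ U, c ∉ M → insert c M ∉ K) :
    ∑ i ∈ M, x i - ∑ j ∈ U \ M, y j < 0 := by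
  obtain ⟨a, ha, b, hb, hab⟩ := Finset.one_lt_card.mp (two_outside U K hmem hU hnoco M hM)
  obtain ⟨haU, haM⟩ := Finset.mem_sdiff.mp ha
  obtain ⟨hbU, hbM⟩ := Finset.mem_sdiff.mp hb
  have hbig : insert a (insert b M) ∉ K := fun h =>
    hmax b hbU hbM (hdown _ _ (Finset.subset_insert _ _) h)
  have hV := (hsub M a b haU hbU hab haM hbM hM hbig).2.1
    (hmax a haU haM) (hmax b hbU hbM)
  have := sdiff_pair_sum y U M a b haU hbU haM hbM hab
  linarith

include hmem hemp hdown hgh hsub in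
lemma Lam_at (T : Finset (Fin n)) (hT : T ∉ K) (hTU : T ⊆ U)
    (hmin : ∀ a ∈ T, T.erase a ∈ K) :
    ∑ i ∈ T, x i - ∑ j ∈ U \ T, y j > 0 := by
  have hTne : T ≠ ∅ := fun h => hT (h ▸ hemp)
  have hT2 : 1 < T.card := by
    rcases Nat.lt_or_ge 1 T.card with h | h
    · exact h
    · exfalso
      have h1 : T.card = 1 := le_antisymm h
        (Finset.card_pos.mpr (Finset.nonempty_of_ne_empty hTne))
      obtain ⟨a, rfl⟩ := Finset.card_eq_one.mp h1
      exact hT (hgh a (hTU (Finset.mem_singleton_self a)))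
  obtain ⟨a, ha, b, hb, hab⟩ := Finset.one_lt_card.mp hT2
  set X1 := (T.erase a).erase b with hX1
  have hb' : b ∈ T.erase a := Finset.mem_erase.mpr ⟨Ne.symm hab, hb⟩
  have eq1 : insert b X1 = T.erase a := Finset.insert_erase hb'
  have eq2 : insert a (insert b X1) = T := by rw [eq1]; exact Finset.insert_erase ha
  have haX1 : a ∉ X1 := by simp [hX1]
  have hbX1 : b ∉ X1 := by simp [hX1]
  have eqa : insert a X1 = T.erase b := by
    ext i
    simp only [hX1, Finset.mem_insert, Finset.mem_erase]
    constructor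
    · rintro (rfl | ⟨hib, hia, hiT⟩)
      · exact ⟨hab, ha⟩
      · exact ⟨hib, hiT⟩
    · rintro ⟨hib, hiT⟩
      rcases eq_or_ne i a with rfl | hia
      · exact Or.inl rfl
      · exact Or.inr ⟨hib, hia, hiT⟩
  have hX1K : X1 ∈ K := hdown _ _ (Finset.erase_subset _ _) (hmin a ha)
  have hL := (hsub X1 a b (hTU ha) (hTU hb) hab haX1 hbX1 hX1K (eq2 ▸ hT)).1
    (by rw [eqa]; exact hmin b hb) (by rw [eq1]; exact hmin a ha)
  have e1 : ∑ i ∈ X1, x i + x a + x b = ∑ i ∈ T, x i := by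
    rw [← eq2]; exact (sum_insert_two x X1 a b hab haX1 hbX1).symm
  rw [eq2] at hL
  linarith

include hmem hemp hdown hU hgh hsub hnoco in
lemma star : ∀ m ∈ U, 0 < x m + y m := by
  classical
  intro m hm
  set F := (U.erase m).powerset.filter (fun S => S ∈ K ∧ insert m S ∈ K) with hF
  have hFne : (∅ : Finset (Fin n)) ∈ F := by
    simp only [hF, Finset.mem_filter, Finset.mem_powerset]
    refine ⟨Finset.empty_subset _, hemp, ?_⟩
    simpa using hgh m hm
  obtain ⟨S, hSF, hSmax⟩ := F.exists_max_image Finset.card ⟨∅, hFne⟩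
  simp only [hF, Finset.mem_filter, Finset.mem_powerset] at hSF
  obtain ⟨hS1, hS2, hS3⟩ := hSF
  have hmS : m ∉ S := fun h => (Finset.mem_erase.mp (hS1 h)).1 rfl
  by_cases hA : ∀ c ∈ U, c ∉ insert m S → insert c S ∈ K
  swap
  · -- Case A : X-configuration
    push_neg at hA
    obtain ⟨c, hcU, hcM, hcK⟩ := hA
    have hcm : c ≠ m := fun h => hcM (h ▸ Finset.mem_insert_self m S)
    have hcS : c ∉ S := fun h => hcM (Finset.mem_insert_of_mem h)
    have hbig : insert c (insert m S) ∉ K := fun h =>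
      hcK (hdown _ _ (by
        intro i hi
        simp only [Finset.mem_insert] at hi ⊢
        tauto) h)
    exact ((hsub S c m hcU hm hcm hcS hmS hS2 hbig).2.2) hS3 hcK
  · -- Case B
    set M := insert m S with hM
    have hMU : M ⊆ U := Finset.insert_subset hm (hS1.trans (Finset.erase_subset _ _))
    have hMK : M ∈ K := hS3
    have hMmax : ∀ c ∈ U, c ∉ M → insert c M ∉ K := by
      intro c hcU hcM hins
      have hcS : c ∉ S := fun h => hcM (Finset.mem_insert_of_mem h)
      have hcm : c ≠ m := fun h => hcM (h ▸ Finset.mem_insert_self m S)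
      have h1 : insert c S ∈ K := hdown _ _ (by
        rw [hM]
        intro i hi
        simp only [Finset.mem_insert] at hi ⊢
        tauto) hins
      have h2 : insert m (insert c S) ∈ K := by
        rw [Finset.insert_comm]; exact hins
      have hmem' : insert c S ∈ F := by
        simp only [hF, Finset.mem_filter, Finset.mem_powerset]
        exact ⟨Finset.insert_subset (Finset.mem_erase.mpr ⟨hcm, hcU⟩) hS1, h1, h2⟩
      have := hSmax _ hmem'
      rw [Finset.card_insert_of_notMem hcS] at this
      omega
    have hfM : ∑ i ∈ M, x i - ∑ j ∈ U \ M, y j < 0 :=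
      V_at U K x y hmem hdown hU hsub hnoco M hMK hMmax
    have key1 : ∀ c ∈ U, c ∉ M →
        ∑ i ∈ insert c M, x i - ∑ j ∈ U \ insert c M, y j > 0 := by
      intro c hcU hcM
      have hcS : c ∉ S := fun h => hcM (Finset.mem_insert_of_mem h)
      have hcm : c ≠ m := fun h => hcM (h ▸ Finset.mem_insert_self m S)
      have hinsc : insert c S ∈ K := hA c hcU hcM
      have hridge : insert c (insert m S) ∉ K := hMmax c hcU hcM
      have hcond := (hsub S c m hcU hm hcm hcS hmS hS2 hridge).1 hinsc hS3
      have e1 : ∑ i ∈ insert c M, x i = ∑ i ∈ S, x i + x c + x m := by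
        rw [hM]; exact sum_insert_two x S c m hcm hcS hmS
      rw [e1]
      have : (insert c M : Finset (Fin n)) = insert c (insert m S) := by rw [hM]
      rw [this]
      linarith
    have key2 : ∀ c ∈ U, c ∉ M → 0 < x c + y c := by
      intro c hcU hcM
      have hdiff := f_diff x y U M (insert c M) (Finset.subset_insert c M)
        (Finset.insert_subset hcU hMU)
      have hsing : (insert c M) \ M = {c} := by
        ext i
        simp only [Finset.mem_sdiff, Finset.mem_insert, Finset.mem_singleton]
        constructor
        · rintro ⟨rfl | h, hiM⟩
          · rfl
          · exact absurd h hiM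
        · rintro rfl
          exact ⟨Or.inl rfl, hcM⟩
      rw [hsing, Finset.sum_singleton] at hdiff
      have := key1 c hcU hcM
      linarith
    -- pick c1 outside M
    obtain ⟨c1, hc1, _, _, _⟩ := Finset.one_lt_card.mp
      (two_outside U K hmem hU hnoco M hMK)
    obtain ⟨hc1U, hc1M⟩ := Finset.mem_sdiff.mp hc1
    have hc1m : c1 ≠ m := fun h => hc1M (h ▸ Finset.mem_insert_self m S)
    have hc1S : c1 ∉ S := fun h => hc1M (Finset.mem_insert_of_mem h)
    have hc1SK : insert c1 S ∈ K := hA c1 hc1U hc1M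
    -- chain family
    set R0 := insert c1 S with hR0
    set Rfam := (U.erase m).powerset.filter (fun R => R0 ⊆ R ∧ R ∈ K) with hRfam
    have hR0mem : R0 ∈ Rfam := by
      simp only [hRfam, Finset.mem_filter, Finset.mem_powerset]
      exact ⟨Finset.insert_subset (Finset.mem_erase.mpr ⟨hc1m, hc1U⟩) hS1,
        Finset.Subset.refl _, hc1SK⟩
    obtain ⟨R, hRmem, hRmax⟩ := Rfam.exists_max_image Finset.card ⟨R0, hR0mem⟩
    simp only [hRfam, Finset.mem_filter, Finset.mem_powerset] at hRmem
    obtain ⟨hR1, hR2, hR3⟩ := hRmem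
    have hmR : m ∉ R := fun h => (Finset.mem_erase.mp (hR1 h)).1 rfl
    -- R is a proper subset of U.erase m
    have hRne : R ≠ U.erase m := by
      rintro rfl
      exact hnoco m hm hR3
    obtain ⟨d, hd⟩ : ((U.erase m) \ R).Nonempty := by
      rw [Finset.sdiff_nonempty]
      intro h
      exact hRne (Finset.Subset.antisymm hR1 h)
    obtain ⟨hd1, hdR⟩ := Finset.mem_sdiff.mp hd
    obtain ⟨hdm, hdU⟩ := Finset.mem_erase.mp hd1
    have hdRK : insert d R ∉ K := by
      intro h
      have hmem' : insert d R ∈ Rfam := by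
        simp only [hRfam, Finset.mem_filter, Finset.mem_powerset]
        exact ⟨Finset.insert_subset hd1 hR1, hR2.trans (Finset.subset_insert _ _), h⟩
      have := hRmax _ hmem'
      rw [Finset.card_insert_of_notMem hdR] at this
      omega
    have hmRK : insert m R ∉ K := by
      intro h
      apply hMmax c1 hc1U hc1M
      refine hdown _ _ ?_ h
      intro i hi
      simp only [hM, Finset.mem_insert] at hi ⊢
      rcases hi with rfl | rfl | hiS
      · exact Or.inr (hR2 (Finset.mem_insert_self _ _))
      · exact Or.inl rfl
      · exact Or.inr (hR2 (Finset.mem_insert_of_mem hiS))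
    have hbig : insert d (insert m R) ∉ K := fun h =>
      hmRK (hdown _ _ (Finset.subset_insert _ _) h)
    have hV := (hsub R d m hdU hm hdm hdR hmR hR3 hbig).2.1 hdRK hmRK
    have hfR : ∑ i ∈ R, x i - ∑ j ∈ U \ R, y j < 0 := by
      have := sdiff_pair_sum y U R d m hdU hm hdR hmR hdm
      linarith
    -- f(R) ≥ f(R0)
    have hRU : R ⊆ U := hR1.trans (Finset.erase_subset _ _)
    have hchain := f_diff x y U R0 R hR2 hRU
    have hposchain : 0 ≤ ∑ i ∈ R \ R0, (x i + y i) := by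
      apply Finset.sum_nonneg
      intro i hi
      obtain ⟨hiR, hiR0⟩ := Finset.mem_sdiff.mp hi
      have hiU : i ∈ U := hRU hiR
      have hiM : i ∉ M := by
        intro h
        rw [hM] at h
        rcases Finset.mem_insert.mp h with rfl | hiS
        · exact hmR hiR
        · exact hiR0 (hR0 ▸ Finset.mem_insert_of_mem hiS)
      exact le_of_lt (key2 i hiU hiM)
    -- f(insert c1 M) = f(R0) + (x m + y m)
    have hstep := f_diff x y U R0 (insert c1 M)
      (by
        rw [hR0, hM]
        intro i hi
        rcases Finset.mem_insert.mp hi with rfl | hiS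
        · exact Finset.mem_insert_self _ _
        · exact Finset.mem_insert_of_mem (Finset.mem_insert_of_mem hiS))
      (Finset.insert_subset hc1U hMU)
    have hsingm : (insert c1 M) \ R0 = {m} := by
      ext i
      simp only [hM, hR0, Finset.mem_sdiff, Finset.mem_insert, Finset.mem_singleton]
      constructor
      · rintro ⟨rfl | rfl | hiS, hnot⟩
        · exact absurd (Or.inl rfl) hnot
        · rfl
        · exact absurd (Or.inr hiS) hnot
      · rintro rfl
        refine ⟨Or.inr (Or.inl rfl), ?_⟩
        rintro (rfl | h)
        · exact hc1m rfl
        · exact hmS h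
    rw [hsingm, Finset.sum_singleton] at hstep
    have hkey1c1 := key1 c1 hc1U hc1M
    linarith

include hmem in
lemma exists_locally_max (A : Finset (Fin n)) (hA : A ∈ K) :
    ∃ M, A ⊆ M ∧ M ∈ K ∧ ∀ c ∈ U, c ∉ M → insert c M ∉ K := by
  classical
  set Fam := U.powerset.filter (fun B => A ⊆ B ∧ B ∈ K) with hFam
  have hne : A ∈ Fam := by
    simp only [hFam, Finset.mem_filter, Finset.mem_powerset]
    exact ⟨hmem A hA, Finset.Subset.refl _, hA⟩
  obtain ⟨M, hMS, hMmax⟩ := Fam.exists_max_image Finset.card ⟨A, hne⟩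
  simp only [hFam, Finset.mem_filter, Finset.mem_powerset] at hMS
  obtain ⟨hMU, hAM, hMK⟩ := hMS
  refine ⟨M, hAM, hMK, ?_⟩
  intro c hcU hcM hins
  have hmem' : insert c M ∈ Fam := by
    simp only [hFam, Finset.mem_filter, Finset.mem_powerset]
    exact ⟨Finset.insert_subset hcU hMU, hAM.trans (Finset.subset_insert _ _), hins⟩
  have := hMmax _ hmem'
  rw [Finset.card_insert_of_notMem hcM] at this
  omega

lemma exists_min_nonface (A : Finset (Fin n)) (hAU : A ⊆ U) (hA : A ∉ K) :
    ∃ T, T ⊆ A ∧ T ∉ K ∧ ∀ a ∈ T, T.erase a ∈ K := by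
  classical
  set Fam := A.powerset.filter (fun B => B ∉ K) with hFam
  have hne : A ∈ Fam := by
    simp only [hFam, Finset.mem_filter, Finset.mem_powerset]
    exact ⟨Finset.Subset.refl _, hA⟩
  obtain ⟨T, hTS, hTmin⟩ := Fam.exists_min_image Finset.card ⟨A, hne⟩
  simp only [hFam, Finset.mem_filter, Finset.mem_powerset] at hTS
  obtain ⟨hTA, hTK⟩ := hTS
  refine ⟨T, hTA, hTK, ?_⟩
  intro a ha
  by_contra hK
  have hmem' : T.erase a ∈ Fam := by
    simp only [hFam, Finset.mem_filter, Finset.mem_powerset]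
    exact ⟨(Finset.erase_subset _ _).trans hTA, hK⟩
  have := hTmin _ hmem'
  have hlt : (T.erase a).card < T.card := Finset.card_erase_lt_of_mem ha
  omega

include hmem hemp hdown hU hgh hsub hnoco in
lemma noCoatomCase :
    ∃ (w : Fin n → ℝ) (q : ℝ), (∀ i, 0 < w i) ∧
      ∀ A, A ⊆ U → (A ∈ K ↔ ∑ i ∈ A, w i < q) := by
  have hstar := star U K x y hmem hemp hdown hU hgh hsub hnoco
  refine ⟨fun i => if i ∈ U then x i + y i else 1, ∑ j ∈ U, y j, ?_, ?_⟩
  · intro i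
    by_cases h : i ∈ U
    · simpa [h] using hstar i h
    · simp [h]
  · intro A hAU
    have hsum : ∑ i ∈ A, (if i ∈ U then x i + y i else 1) = ∑ i ∈ A, (x i + y i) :=
      Finset.sum_congr rfl fun i hi => if_pos (hAU hi)
    rw [hsum]
    have hsplit : ∑ j ∈ U \ A, y j + ∑ j ∈ A, y j = ∑ j ∈ U, y j :=
      Finset.sum_sdiff hAU
    have hadd : ∑ i ∈ A, (x i + y i) = ∑ i ∈ A, x i + ∑ i ∈ A, y i :=
      Finset.sum_add_distrib
    constructor
    · intro hAK
      obtain ⟨M, hAM, hMK, hMmax⟩ := exists_locally_max U K hmem A hAK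
      have hfM := V_at U K x y hmem hdown hU hsub hnoco M hMK hMmax
      have hdiff := f_diff x y U A M hAM (hmem M hMK)
      have hpos : 0 ≤ ∑ i ∈ M \ A, (x i + y i) := by
        apply Finset.sum_nonneg
        intro i hi
        exact le_of_lt (hstar i (hmem M hMK (Finset.mem_sdiff.mp hi).1))
      linarith
    · intro hf
      by_contra hAK
      obtain ⟨T, hTA, hTK, hTmin⟩ := exists_min_nonface U K A hAU hAK
      have hfT := Lam_at U K x y hmem hemp hdown hgh hsub T hTK (hTA.trans hAU) hTmin
      have hdiff := f_diff x y U T A hTA hAU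
      have hpos : 0 ≤ ∑ i ∈ A \ T, (x i + y i) := by
        apply Finset.sum_nonneg
        intro i hi
        exact le_of_lt (hstar i (hAU (Finset.mem_sdiff.mp hi).1))
      linarith

end Main

lemma relMain : ∀ (N : ℕ) (U : Finset (Fin n)) (K : Set (Finset (Fin n))) (x y : Fin n → ℝ),
    U.card ≤ N →
    (∀ A ∈ K, A ⊆ U) → ∅ ∈ K → (∀ A B : Finset (Fin n), A ⊆ B → B ∈ K → A ∈ K) →
    U ∉ K → (∀ i ∈ U, ({i} : Finset (Fin n)) ∈ K) → RelSub U K x y →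
    ∃ (w : Fin n → ℝ) (q : ℝ), (∀ i, 0 < w i) ∧
      ∀ A, A ⊆ U → (A ∈ K ↔ ∑ i ∈ A, w i < q) := by
  intro N
  induction N with
  | zero =>
    intro U K x y hcard hmem hemp hdown hU hgh hsub
    exact absurd (Finset.card_eq_zero.mp (Nat.le_zero.mp hcard) ▸ hemp) hU
  | succ N ih =>
    intro U K x y hcard hmem hemp hdown hU hgh hsub
    classical
    by_cases hco : ∃ c ∈ U, U.erase c ∈ K
    swap
    · push_neg at hco
      exact noCoatomCase U K x y hmem hemp hdown hU hgh hsub hco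
    obtain ⟨c, hcU, hcoat⟩ := hco
    set G := (U.erase c).filter (fun i => ({i, c} : Finset (Fin n)) ∈ K) with hG
    have hGU : G ⊆ U.erase c := Finset.filter_subset _ _
    have hcG : c ∉ G := fun h => (Finset.mem_erase.mp (hGU h)).1 rfl
    have hGsubU : G ⊆ U := hGU.trans (Finset.erase_subset _ _)
    have hchar : ∀ A, A ⊆ U → c ∈ A → A ∈ K → A.erase c ⊆ G := by
      intro A hAU hcA hAK i hi
      obtain ⟨hic, hiA⟩ := Finset.mem_erase.mp hi
      simp only [hG, Finset.mem_filter, Finset.mem_erase]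
      refine ⟨⟨hic, hAU hiA⟩, ?_⟩
      apply hdown _ A ?_ hAK
      intro j hj
      rcases Finset.mem_insert.mp hj with rfl | hj
      · exact hiA
      · rw [Finset.mem_singleton.mp hj]; exact hcA
    have hUcard1 : 1 ≤ U.card := Finset.card_pos.mpr ⟨c, hcU⟩
    by_cases hGc : insert c G ∈ K
    · -- direct weights
      set Ucr := (U.card : ℝ) with hUcr
      have hUcr1 : (1 : ℝ) ≤ Ucr := by rw [hUcr]; exact_mod_cast hUcard1
      refine ⟨fun i => if i = c then 2*Ucr else if i ∈ G then 1/(2*Ucr+2) else 2,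
        2*Ucr + 1, ?_, ?_⟩
      · intro i
        by_cases h1 : i = c
        · simp only [h1, if_pos]; positivity
        · by_cases h2 : i ∈ G <;> simp only [h1, h2, if_neg, if_pos, if_true, if_false] <;> positivity
      · intro A hAU
        by_cases hcA : c ∈ A
        · by_cases hAG : A.erase c ⊆ G
          · have hAK : A ∈ K := by
              apply hdown A (insert c G) ?_ hGc
              intro j hj
              rcases eq_or_ne j c with rfl | hjc
              · exact Finset.mem_insert_self _ _
              · exact Finset.mem_insert_of_mem (hAG (Finset.mem_erase.mpr ⟨hjc, hj⟩))
            have hsum : ∑ i ∈ A, (fun i => if i = c then 2*Ucr else if i ∈ G then 1/(2*Ucr+2) else 2) i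
                < 2*Ucr + 1 := by
              rw [← Finset.add_sum_erase _ _ hcA]
              simp only [eq_self_iff_true, if_true]
              have hconst : ∑ i ∈ A.erase c,
                  (fun i => if i = c then 2*Ucr else if i ∈ G then 1/(2*Ucr+2) else 2) i
                  = (A.erase c).card * (1/(2*Ucr+2)) := by
                rw [Finset.sum_congr rfl (fun i hi => ?_), Finset.sum_const, nsmul_eq_mul]
                have hic := (Finset.mem_erase.mp hi).1
                simp only [if_neg hic, if_pos (hAG hi)]
              rw [hconst]
              have hcardle : ((A.erase c).card : ℝ) ≤ Ucr := by
                rw [hUcr]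
                exact_mod_cast Finset.card_le_card ((Finset.erase_subset c A).trans hAU)
              have hpos : (0:ℝ) < 2*Ucr+2 := by linarith
              have : (A.erase c).card * (1/(2*Ucr+2)) < 1 := by
                rw [mul_one_div, div_lt_one hpos]
                linarith
              linarith
            exact iff_of_true hAK hsum
          · obtain ⟨j, hjA, hjG⟩ := Finset.not_subset.mp hAG
            have hjc := (Finset.mem_erase.mp hjA).1
            have hjA' := (Finset.mem_erase.mp hjA).2
            have hAK : A ∉ K := fun h => hjG (hchar A hAU hcA h hjA)
            have hsum : ¬ (∑ i ∈ A, (fun i => if i = c then 2*Ucr else if i ∈ G then 1/(2*Ucr+2) else 2) i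
                < 2*Ucr + 1) := by
              push_neg
              have hsubpair : ({c, j} : Finset (Fin n)) ⊆ A := by
                intro i hi
                rcases Finset.mem_insert.mp hi with rfl | hi
                · exact hcA
                · rw [Finset.mem_singleton.mp hi]; exact hjA'
              have hnn : ∀ i ∈ A, i ∉ ({c, j} : Finset (Fin n)) →
                  (0:ℝ) ≤ (fun i => if i = c then 2*Ucr else if i ∈ G then 1/(2*Ucr+2) else 2) i := by
                intro i _ _
                by_cases h1 : i = c
                · simp only [h1, if_pos]; positivity
                · by_cases h2 : i ∈ G <;>
                    simp only [h1, h2, if_neg, if_pos, if_true, if_false] <;> positivity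
              have hle := Finset.sum_le_sum_of_subset_of_nonneg hsubpair hnn
              rw [Finset.sum_pair (Ne.symm hjc)] at hle
              simp only [eq_self_iff_true, if_true, if_neg hjc, if_neg hjG] at hle
              linarith
            exact iff_of_false hAK hsum
        · have hAK : A ∈ K := by
            apply hdown A (U.erase c) ?_ hcoat
            intro i hi
            exact Finset.mem_erase.mpr ⟨fun h => hcA (h ▸ hi), hAU hi⟩
          have hsum : ∑ i ∈ A, (fun i => if i = c then 2*Ucr else if i ∈ G then 1/(2*Ucr+2) else 2) i
              < 2*Ucr + 1 := by
            have hle : ∀ i ∈ A,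
                (fun i => if i = c then 2*Ucr else if i ∈ G then 1/(2*Ucr+2) else 2) i ≤ 2 := by
              intro i hi
              have hic : i ≠ c := fun h => hcA (h ▸ hi)
              by_cases h2 : i ∈ G
              · simp only [if_neg hic, if_pos h2]
                have hpos : (0:ℝ) < 2*Ucr+2 := by linarith
                rw [div_le_iff₀ hpos]
                nlinarith
              · simp only [if_neg hic, if_neg h2]
                exact le_refl _
            calc ∑ i ∈ A, (fun i => if i = c then 2*Ucr else if i ∈ G then 1/(2*Ucr+2) else 2) i
                ≤ ∑ _i ∈ A, (2:ℝ) := Finset.sum_le_sum hle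
              _ = A.card * 2 := by rw [Finset.sum_const, nsmul_eq_mul]
              _ ≤ (Ucr - 1) * 2 := by
                  have h1 : A.card ≤ U.card - 1 := by
                    have := Finset.card_le_card (show A ⊆ U.erase c from fun i hi =>
                      Finset.mem_erase.mpr ⟨fun h => hcA (h ▸ hi), hAU hi⟩)
                    rwa [Finset.card_erase_of_mem hcU] at this
                  have h2 : ((A.card : ℝ)) ≤ Ucr - 1 := by
                    rw [hUcr]
                    have := (Nat.cast_le (α := ℝ)).mpr h1
                    rwa [Nat.cast_sub hUcard1, Nat.cast_one] at this
                  nlinarith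
              _ < 2*Ucr + 1 := by linarith
          exact iff_of_true hAK hsum
    · -- recursion case
      have hGne : G.Nonempty := by
        by_contra h
        rw [Finset.not_nonempty_iff_eq_empty] at h
        apply hGc
        rw [h]
        simpa using hgh c hcU
      set L : Set (Finset (Fin n)) := {A | A ⊆ G ∧ insert c A ∈ K} with hL
      set BAD := U \ insert c G with hBAD
      have hgpos : (0:ℝ) < G.card := by exact_mod_cast Finset.card_pos.mpr hGne
      set δ := (x c - ∑ j ∈ BAD, y j) / (G.card : ℝ) with hδ
      have hgδ : (G.card : ℝ) * δ = x c - ∑ j ∈ BAD, y j := by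
        rw [hδ]; field_simp
      have hset : ∀ T : Finset (Fin n), T ⊆ G →
          U \ insert c T = (G \ T) ∪ BAD := by
        intro T hTG
        ext i
        simp only [hBAD, Finset.mem_sdiff, Finset.mem_union, Finset.mem_insert]
        constructor
        · rintro ⟨hiU, hnot⟩
          push_neg at hnot
          obtain ⟨hic, hiT⟩ := hnot
          by_cases hiG : i ∈ G
          · exact Or.inl ⟨hiG, hiT⟩
          · refine Or.inr ⟨hiU, ?_⟩
            push_neg
            exact ⟨hic, hiG⟩
        · rintro (⟨hiG, hiT⟩ | ⟨hiU, hnot⟩)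
          · refine ⟨hGsubU hiG, ?_⟩
            push_neg
            exact ⟨fun h => hcG (h ▸ hiG), hiT⟩
          · push_neg at hnot
            refine ⟨hiU, ?_⟩
            push_neg
            exact ⟨hnot.1, fun h => hnot.2 (hTG h)⟩
      have hdisj : ∀ T : Finset (Fin n), Disjoint (G \ T) BAD := by
        intro T
        rw [Finset.disjoint_left]
        intro i hi hbad
        rw [hBAD, Finset.mem_sdiff] at hbad
        exact hbad.2 (Finset.mem_insert_of_mem (Finset.mem_sdiff.mp hi).1)
      have hRel : RelSub G L (fun i => x i + δ) (fun i => y i - δ) := by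
        intro X1 c1 c2 hc1G hc2G hne12 h1X h2X hX1L hbigL
        obtain ⟨hX1G, hX1K⟩ := hX1L
        have hc1U : c1 ∈ U := hGsubU hc1G
        have hc2U : c2 ∈ U := hGsubU hc2G
        have hc1c : c1 ≠ c := fun h => hcG (h ▸ hc1G)
        have hc2c : c2 ≠ c := fun h => hcG (h ▸ hc2G)
        have hcX1 : c ∉ X1 := fun h => hcG (hX1G h)
        have hcomm1 : insert c1 (insert c2 (insert c X1))
            = insert c (insert c1 (insert c2 X1)) := by
          rw [Finset.insert_comm c2 c, Finset.insert_comm c1 c]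
        have hT : insert c1 (insert c2 X1) ⊆ G :=
          Finset.insert_subset hc1G (Finset.insert_subset hc2G hX1G)
        have hbigK : insert c1 (insert c2 (insert c X1)) ∉ K := by
          rw [hcomm1]
          intro h
          exact hbigL ⟨hT, h⟩
        have ht1 : insert c1 X1 ∈ L ↔ insert c1 (insert c X1) ∈ K := by
          constructor
          · rintro ⟨_, h⟩
            rwa [Finset.insert_comm] at h
          · intro h
            exact ⟨Finset.insert_subset hc1G hX1G, by rwa [Finset.insert_comm]⟩
        have ht2 : insert c2 X1 ∈ L ↔ insert c2 (insert c X1) ∈ K := by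
          constructor
          · rintro ⟨_, h⟩
            rwa [Finset.insert_comm] at h
          · intro h
            exact ⟨Finset.insert_subset hc2G hX1G, by rwa [Finset.insert_comm]⟩
        have hK := hsub (insert c X1) c1 c2 hc1U hc2U hne12
          (by simp only [Finset.mem_insert]; push_neg; exact ⟨hc1c, h1X⟩)
          (by simp only [Finset.mem_insert]; push_neg; exact ⟨hc2c, h2X⟩)
          hX1K hbigK
        have hsx : ∑ i ∈ insert c X1, x i = x c + ∑ i ∈ X1, x i := Finset.sum_insert hcX1
        have hsy : ∑ j ∈ U \ insert c1 (insert c2 (insert c X1)), y j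
            = ∑ j ∈ G \ insert c1 (insert c2 X1), y j + ∑ j ∈ BAD, y j := by
          rw [hcomm1, hset _ hT, Finset.sum_union (hdisj _)]
        have hcardT : (insert c1 (insert c2 X1)).card = X1.card + 2 := by
          rw [Finset.card_insert_of_notMem (by
            simp only [Finset.mem_insert]; push_neg; exact ⟨hne12, h1X⟩),
            Finset.card_insert_of_notMem h2X]
        have hcardGT : ((G \ insert c1 (insert c2 X1)).card : ℝ)
            = (G.card : ℝ) - ((X1.card : ℝ) + 2) := by
          rw [Finset.card_sdiff_of_subset hT, hcardT]
          have hle : X1.card + 2 ≤ G.card := by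
            rw [← hcardT]; exact Finset.card_le_card hT
          push_cast [Nat.cast_sub hle]
          ring
        have hxs : ∀ (s : Finset (Fin n)),
            ∑ i ∈ s, (x i + δ) = ∑ i ∈ s, x i + (s.card : ℝ) * δ := by
          intro s
          rw [Finset.sum_add_distrib, Finset.sum_const, nsmul_eq_mul]
        have hys : ∀ (s : Finset (Fin n)),
            ∑ i ∈ s, (y i - δ) = ∑ i ∈ s, y i - (s.card : ℝ) * δ := by
          intro s
          rw [Finset.sum_sub_distrib, Finset.sum_const, nsmul_eq_mul]
        refine ⟨?_, ?_, ?_⟩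
        · intro hm1 hm2
          have hΛ := hK.1 (ht1.mp hm1) (ht2.mp hm2)
          rw [hsx, hsy] at hΛ
          rw [hxs, hys, hcardGT]
          simp only []
          nlinarith [hΛ, hgδ]
        · intro hm1 hm2
          have hV := hK.2.1 (fun h => hm1 (ht1.mpr h)) (fun h => hm2 (ht2.mpr h))
          rw [hsx, hsy] at hV
          rw [hxs, hys, hcardGT]
          simp only []
          nlinarith [hV, hgδ]
        · intro hm2 hm1
          have hX := hK.2.2 (ht2.mp hm2) (fun h => hm1 (ht1.mpr h))
          simp only []
          linarith [hX]
      have hGcard : G.card ≤ N := by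
        have h1 : G.card ≤ (U.erase c).card := Finset.card_le_card hGU
        have h2 : (U.erase c).card = U.card - 1 := Finset.card_erase_of_mem hcU
        omega
      obtain ⟨wL, qL, hwL, hiffL⟩ := ih G L (fun i => x i + δ) (fun i => y i - δ) hGcard
        (fun A hA => hA.1)
        ⟨Finset.empty_subset _, by simpa using hgh c hcU⟩
        (fun A B hAB hB => ⟨hAB.trans hB.1, hdown _ _ (Finset.insert_subset_insert c hAB) hB.2⟩)
        (fun h => hGc h.2)
        (fun i hiG => ⟨Finset.singleton_subset_iff.mpr hiG, by
          have hik : ({i, c} : Finset (Fin n)) ∈ K := by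
            have h' := hiG
            rw [hG] at h'
            exact (Finset.mem_filter.mp h').2
          have : insert c ({i} : Finset (Fin n)) = ({i, c} : Finset (Fin n)) := by
            rw [Finset.pair_comm]
          rwa [this]⟩)
        hRel
      set s := ∑ i ∈ G, wL i with hs
      have hspos : 0 < s := Finset.sum_pos (fun i _ => hwL i) hGne
      have hs1 : (0:ℝ) < s + 1 := by linarith
      have hqLpos : 0 < qL := by
        have h := (hiffL ∅ (Finset.empty_subset _)).mp
          ⟨Finset.empty_subset _, by simpa using hgh c hcU⟩
        simpa using h
      have hqLs : qL ≤ s := by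
        by_contra h
        push_neg at h
        exact hGc (((hiffL G (Finset.Subset.refl _)).mpr (by rw [← hs]; exact h)).2)
      have hqhat1 : qL/(s+1) < 1 := by
        rw [div_lt_one hs1]; linarith
      have hqhat0 : 0 < qL/(s+1) := by positivity
      refine ⟨fun i => if i = c then (BAD.card : ℝ) + 2 else if i ∈ G then wL i / (s+1) else 1,
        (BAD.card : ℝ) + 2 + qL/(s+1), ?_, ?_⟩
      · intro i
        by_cases h1 : i = c
        · simp only [h1, if_pos]; positivity
        · by_cases h2 : i ∈ G <;>
            simp only [h1, h2, if_neg, if_pos, if_true, if_false, not_false_iff]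
          · exact div_pos (hwL i) hs1
          · norm_num
      · intro A hAU
        by_cases hcA : c ∈ A
        · by_cases hAG : A.erase c ⊆ G
          · have hiffA : A ∈ K ↔ A.erase c ∈ L := by
              constructor
              · intro h
                exact ⟨hAG, by rwa [Finset.insert_erase hcA]⟩
              · rintro ⟨_, h⟩
                rwa [Finset.insert_erase hcA] at h
            have hsumA : ∑ i ∈ A,
                (fun i => if i = c then (BAD.card : ℝ) + 2 else if i ∈ G then wL i / (s+1) else 1) i
                = ((BAD.card:ℝ)+2) + (∑ i ∈ A.erase c, wL i)/(s+1) := by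
              rw [← Finset.add_sum_erase _ _ hcA]
              simp only [eq_self_iff_true, if_true]
              congr 1
              rw [Finset.sum_div]
              apply Finset.sum_congr rfl
              intro i hi
              have hic := (Finset.mem_erase.mp hi).1
              simp only [if_neg hic, if_pos (hAG hi)]
            rw [hiffA, hiffL (A.erase c) hAG, hsumA]
            constructor
            · intro h
              have := (div_lt_div_iff_of_pos_right hs1).mpr h
              linarith
            · intro h
              have h2 : (∑ i ∈ A.erase c, wL i)/(s+1) < qL/(s+1) := by linarith
              exact (div_lt_div_iff_of_pos_right hs1).mp h2
          · obtain ⟨j, hjA, hjG⟩ := Finset.not_subset.mp hAG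
            have hjc := (Finset.mem_erase.mp hjA).1
            have hjA' := (Finset.mem_erase.mp hjA).2
            have hAK : A ∉ K := fun h => hjG (hchar A hAU hcA h hjA)
            have hsum : ¬ (∑ i ∈ A,
                (fun i => if i = c then (BAD.card : ℝ) + 2 else if i ∈ G then wL i / (s+1) else 1) i
                < (BAD.card : ℝ) + 2 + qL/(s+1)) := by
              push_neg
              have hsubpair : ({c, j} : Finset (Fin n)) ⊆ A := by
                intro i hi
                rcases Finset.mem_insert.mp hi with rfl | hi
                · exact hcA
                · rw [Finset.mem_singleton.mp hi]; exact hjA'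
              have hnn : ∀ i ∈ A, i ∉ ({c, j} : Finset (Fin n)) →
                  (0:ℝ) ≤ (fun i => if i = c then (BAD.card : ℝ) + 2 else if i ∈ G then wL i / (s+1) else 1) i := by
                intro i _ _
                by_cases h1 : i = c
                · simp only [h1, if_pos]; positivity
                · by_cases h2 : i ∈ G <;>
                    simp only [h1, h2, if_neg, if_pos, if_true, if_false, not_false_iff]
                  · exact le_of_lt (div_pos (hwL i) hs1)
                  · norm_num
              have hle := Finset.sum_le_sum_of_subset_of_nonneg hsubpair hnn
              rw [Finset.sum_pair (Ne.symm hjc)] at hle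
              simp only [eq_self_iff_true, if_true, if_neg hjc, if_neg hjG] at hle
              linarith
            exact iff_of_false hAK hsum
        · have hAK : A ∈ K := by
            apply hdown A (U.erase c) ?_ hcoat
            intro i hi
            exact Finset.mem_erase.mpr ⟨fun h => hcA (h ▸ hi), hAU hi⟩
          have hsum : ∑ i ∈ A,
              (fun i => if i = c then (BAD.card : ℝ) + 2 else if i ∈ G then wL i / (s+1) else 1) i
              < (BAD.card : ℝ) + 2 + qL/(s+1) := by
            rw [← Finset.sum_inter_add_sum_sdiff A G]
            have h1 : ∑ i ∈ A ∩ G,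
                (fun i => if i = c then (BAD.card : ℝ) + 2 else if i ∈ G then wL i / (s+1) else 1) i
                ≤ s/(s+1) := by
              have he : ∑ i ∈ A ∩ G,
                  (fun i => if i = c then (BAD.card : ℝ) + 2 else if i ∈ G then wL i / (s+1) else 1) i
                  = ∑ i ∈ A ∩ G, wL i / (s+1) := by
                apply Finset.sum_congr rfl
                intro i hi
                have hiG : i ∈ G := (Finset.mem_inter.mp hi).2
                have hic : i ≠ c := fun h => hcG (h ▸ hiG)
                simp only [if_neg hic, if_pos hiG]
              rw [he, ← Finset.sum_div]
              have hnum : ∑ i ∈ A ∩ G, wL i ≤ ∑ i ∈ G, wL i :=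
                Finset.sum_le_sum_of_subset_of_nonneg Finset.inter_subset_right
                  (fun i _ _ => le_of_lt (hwL i))
              rw [hs]
              exact (div_le_div_iff_of_pos_right hs1).mpr hnum
            have h2 : ∑ i ∈ A \ G,
                (fun i => if i = c then (BAD.card : ℝ) + 2 else if i ∈ G then wL i / (s+1) else 1) i
                = ((A \ G).card : ℝ) := by
              rw [Finset.sum_congr rfl (fun i hi => ?_), Finset.sum_const, nsmul_eq_mul, mul_one]
              obtain ⟨hiA, hiG⟩ := Finset.mem_sdiff.mp hi
              have hic : i ≠ c := fun h => hcA (h ▸ hiA)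
              simp only [if_neg hic, if_neg hiG]
            have h3 : ((A \ G).card : ℝ) ≤ (BAD.card : ℝ) := by
              have hsubB : A \ G ⊆ BAD := by
                intro i hi
                obtain ⟨hiA, hiG⟩ := Finset.mem_sdiff.mp hi
                rw [hBAD, Finset.mem_sdiff]
                refine ⟨hAU hiA, ?_⟩
                simp only [Finset.mem_insert]
                push_neg
                exact ⟨fun h => hcA (h ▸ hiA), hiG⟩
              exact_mod_cast Finset.card_le_card hsubB
            have h4 : s/(s+1) < 1 := by
              rw [div_lt_one hs1]; linarith
            linarith
          exact iff_of_true hAK hsum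

end ThresholdAux

/-- If a proper simplicial complex `K` on `[n]` without ghost
vertices admits a K-submodular function, then `K` is a threshold complex. -/
theorem threshold_of_KSubmodular (n : ℕ) (K : Set (Finset (Fin n)))
    (hK : IsComplex n K) (hproper : K ≠ Set.univ) (hghost : NoGhost n K)
    (x y : Fin n → ℝ) (hxy : IsKSubmodular n K x y) :
    IsThreshold n K := by
  classical
  have hUnotK : (Finset.univ : Finset (Fin n)) ∉ K := by
    intro h
    apply hproper
    apply Set.eq_univ_of_forall
    intro A
    exact hK.2 A Finset.univ (Finset.subset_univ A) h
  have hrel : ThresholdAux.RelSub Finset.univ K x y := by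
    intro X1 c1 c2 _ _ hne h1 h2 hX1 hbig
    have h := hxy X1 c1 c2 hne h1 h2 hX1 hbig
    rwa [Finset.compl_eq_univ_sdiff] at h
  obtain ⟨w, q, hw, hiff⟩ := ThresholdAux.relMain (Finset.univ : Finset (Fin n)).card
    Finset.univ K x y le_rfl (fun A _ => Finset.subset_univ A) hK.1
    hK.2 hUnotK (fun i _ => hghost i) hrel
  exact ⟨w, q, hw, fun A => hiff A (Finset.subset_univ A)⟩
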